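/- Let c ∈ ℝ and consider f_c : ℝ → ℝ, f_c(z) = z² + c. (1) If c > 1/4, then no x ∈ ℝ has bounded forward orbit under f_c. (2) If −2 ≤ c ≤ 1/4 and a = 1/2 + √(1/4 − c), then x ∈ ℝ has bounded forward orbit under f_c if and only if |x| ≤ a. (3) If c < −2 and a = 1/2 + √(1/4 − c), then −a − c ≥ 0, and every x ∈ ℝ with bounded forward orbit under f_c satisfies √(−a − c) ≤ |x| ≤ a. -/

import Mathlib

/-- The forward orbit of `x` under `f` is bounded in `ℝ`. -/
def BoundedOrbit (f : ℝ → ℝ) (x : ℝ) : Prop :=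
  Bornology.IsBounded (Set.range fun n : ℕ => f^[n] x)

private lemma unbounded_of_growth (f : ℝ → ℝ) (x δ : ℝ) (hδ : 0 < δ)
    (h : ∀ t, x ≤ t → t + δ ≤ f t) :
    ¬ BoundedOrbit f x := by
  have key : ∀ n : ℕ, x + n * δ ≤ f^[n] x := by
    intro n
    induction n with
    | zero => simp
    | succ n ih =>
      have hn0 : (0:ℝ) ≤ (n:ℝ) * δ := mul_nonneg n.cast_nonneg hδ.le
      have hx : x ≤ f^[n] x := by linarith
      have h2 := h _ hx
      rw [Function.iterate_succ_apply']
      push_cast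
      nlinarith
  intro hb
  rw [BoundedOrbit, isBounded_iff_bddBelow_bddAbove] at hb
  obtain ⟨b, hb⟩ := hb.2
  obtain ⟨n, hn⟩ := exists_nat_gt ((b - x) / δ)
  have h1 : f^[n] x ≤ b := hb (Set.mem_range_self n)
  have h2 := key n
  have h3 := (div_lt_iff₀ hδ).mp hn
  linarith

private lemma bounded_shift {f : ℝ → ℝ} {x : ℝ}
    (h : BoundedOrbit f x) : BoundedOrbit f (f x) := by
  apply h.subset
  rintro _ ⟨n, rfl⟩
  exact ⟨n + 1, (Function.iterate_succ_apply f n x).symm⟩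

private lemma escape (c : ℝ) (hc : c ≤ 1/4) (x : ℝ)
    (hx : 1/2 + Real.sqrt (1/4 - c) < |x|) :
    ¬ BoundedOrbit (fun z => z ^ 2 + c) x := by
  set s := Real.sqrt (1/4 - c) with hs
  have hs0 : 0 ≤ s := Real.sqrt_nonneg _
  have hs2 : s ^ 2 = 1/4 - c := Real.sq_sqrt (by linarith)
  intro hb
  have hb' := bounded_shift hb
  set x1 := x ^ 2 + c with hx1
  have habs : |x| ^ 2 = x ^ 2 := sq_abs x
  have hx1a : 1/2 + s < x1 := by nlinarith [abs_nonneg x]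
  have hδ : 0 < x1 ^ 2 + c - x1 := by nlinarith [abs_nonneg x]
  refine unbounded_of_growth (fun z => z ^ 2 + c) x1 (x1 ^ 2 + c - x1) hδ ?_ hb'
  intro t ht
  nlinarith

theorem real_filledJulia_trichotomy (c : ℝ) :
    (1 / 4 < c → ∀ x : ℝ, ¬BoundedOrbit (fun z => z ^ 2 + c) x) ∧
    (-2 ≤ c → c ≤ 1 / 4 →
      ∀ x : ℝ, BoundedOrbit (fun z => z ^ 2 + c) x ↔
        |x| ≤ 1 / 2 + Real.sqrt (1 / 4 - c)) ∧
    (c < -2 →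
      0 ≤ -(1 / 2 + Real.sqrt (1 / 4 - c)) - c ∧
      ∀ x : ℝ, BoundedOrbit (fun z => z ^ 2 + c) x →
        Real.sqrt (-(1 / 2 + Real.sqrt (1 / 4 - c)) - c) ≤ |x| ∧
        |x| ≤ 1 / 2 + Real.sqrt (1 / 4 - c)) := by
  refine ⟨?_, ?_, ?_⟩
  · -- case c > 1/4
    intro hc x
    exact unbounded_of_growth _ x (c - 1/4) (by linarith)
      (fun t _ => by show t + (c - 1/4) ≤ t ^ 2 + c; nlinarith [sq_nonneg (t - 1/2)])
  · -- case -2 ≤ c ≤ 1/4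
    intro hc1 hc2 x
    set s := Real.sqrt (1/4 - c) with hs
    have hs0 : 0 ≤ s := Real.sqrt_nonneg _
    have hs2 : s ^ 2 = 1/4 - c := Real.sq_sqrt (by linarith)
    constructor
    · intro hb
      by_contra h
      push_neg at h
      exact escape c (by linarith) x (by rw [← hs]; linarith) hb
    · intro hx
      -- a + c ≥ 0
      have hac : 0 ≤ (1/2 + s) + c := by
        rcases le_or_gt 0 (c + 1/2) with h | h
        · linarith
        · nlinarith
      have step : ∀ t : ℝ, |t| ≤ 1/2 + s → |t ^ 2 + c| ≤ 1/2 + s := by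
        intro t ht
        rw [abs_le] at ht ⊢
        constructor
        · nlinarith [sq_nonneg t]
        · nlinarith
      have key : ∀ n : ℕ, |(fun z => z ^ 2 + c)^[n] x| ≤ 1/2 + s := by
        intro n
        induction n with
        | zero => simpa using hx
        | succ n ih =>
          rw [Function.iterate_succ_apply']
          exact step _ ih
      rw [BoundedOrbit]
      apply (Metric.isBounded_Icc (-(1/2 + s)) (1/2 + s)).subset
      rintro _ ⟨n, rfl⟩
      have := key n
      rw [abs_le] at this
      exact ⟨this.1, this.2⟩
  · -- case c < -2
    intro hc
    set s := Real.sqrt (1/4 - c) with hs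
    have hs0 : 0 ≤ s := Real.sqrt_nonneg _
    have hs2 : s ^ 2 = 1/4 - c := Real.sq_sqrt (by linarith)
    have hsle : s ≤ -c - 1/2 := by
      have h1 : (1/4 - c) ≤ (-c - 1/2) ^ 2 := by nlinarith
      calc s ≤ Real.sqrt ((-c - 1/2) ^ 2) := Real.sqrt_le_sqrt h1
        _ = -c - 1/2 := Real.sqrt_sq (by linarith)
    have hac : 0 ≤ -(1/2 + s) - c := by linarith
    refine ⟨hac, fun x hb => ⟨?_, ?_⟩⟩
    · -- lower bound
      have hb' := bounded_shift hb
      have h1 : |x ^ 2 + c| ≤ 1/2 + s := by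
        by_contra h
        push_neg at h
        exact escape c (by linarith) _ (by rw [← hs]; linarith) hb'
      have h2 : -(1/2 + s) - c ≤ x ^ 2 := by
        rw [abs_le] at h1; linarith [h1.1]
      calc Real.sqrt (-(1/2 + s) - c) ≤ Real.sqrt (x ^ 2) := Real.sqrt_le_sqrt h2
        _ = |x| := Real.sqrt_sq_eq_abs x
    · -- upper bound
      by_contra h
      push_neg at h
      exact escape c (by linarith) x (by rw [← hs]; linarith) hb
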